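/- Let f : ℝ^d → ℝ be convex and Lipschitz continuous, and suppose f is symmetric with respect to a point x⋆ ∈ ℝ^d, i.e., f(x⋆ + x) = f(x⋆ − x) for all x ∈ ℝ^d. Let μ ∈ ℝ^d, let Σ be a d×d positive definite matrix, let X ~ N(μ, Σ), and let λ ∈ [0,1]. Then E[f((1−λ)·X + λ·μ)] ≥ E[f((1−λ)·X + λ·x⋆)]. (Equivalently, the Gaussian optimistic smoothing surrogate s of f built from N(μ, Σ) and λ satisfies s(μ) ≥ s(x⋆).) -/

import Mathlib

open MeasureTheory Matrix

/-- The density of the Gaussian distribution `N(μ, Σ)` on `ℝ^d` (for `Σ` positive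
definite) with respect to Lebesgue measure. -/
noncomputable def gaussPdf (d : ℕ) (μ : Fin d → ℝ) (S : Matrix (Fin d) (Fin d) ℝ)
    (x : Fin d → ℝ) : ℝ :=
  (2 * Real.pi) ^ (-(d : ℝ) / 2) * Real.sqrt S.det⁻¹ *
    Real.exp (-(1 / 2) * ((x - μ) ⬝ᵥ S⁻¹.mulVec (x - μ)))

lemma aux_q_cont {d : ℕ} (T : Matrix (Fin d) (Fin d) ℝ) :
    Continuous fun v : Fin d → ℝ => v ⬝ᵥ T *ᵥ v := by
  simp only [dotProduct, mulVec]
  exact continuous_finset_sum _ fun i _ =>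
    (continuous_apply i).mul (continuous_finset_sum _ fun j _ =>
      continuous_const.mul (continuous_apply j))

lemma aux_posdef_bound {d : ℕ} (T : Matrix (Fin d) (Fin d) ℝ) (hT : T.PosDef) :
    ∃ ε : ℝ, 0 < ε ∧ ∀ v : Fin d → ℝ, ε * (∑ i, v i ^ 2) ≤ v ⬝ᵥ T *ᵥ v := by
  rcases Nat.eq_zero_or_pos d with hd | hd
  · subst hd
    refine ⟨1, one_pos, fun v => ?_⟩
    simp [dotProduct]
  · have : Nontrivial (Fin d → ℝ) := by
      have : NeZero d := ⟨hd.ne'⟩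
      infer_instance
    have hne : (Metric.sphere (0 : Fin d → ℝ) 1).Nonempty :=
      NormedSpace.sphere_nonempty.mpr zero_le_one
    obtain ⟨w, hw, hmin⟩ := (isCompact_sphere (0 : Fin d → ℝ) 1).exists_isMinOn hne
      (aux_q_cont T).continuousOn
    have hw1 : ‖w‖ = 1 := mem_sphere_zero_iff_norm.mp hw
    have hw0 : w ≠ 0 := by
      intro h; rw [h] at hw1; simp at hw1
    have hε0 : 0 < w ⬝ᵥ T *ᵥ w := by simpa using hT.dotProduct_mulVec_pos hw0
    have hd' : (0 : ℝ) < d := by exact_mod_cast hd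
    refine ⟨(w ⬝ᵥ T *ᵥ w) / d, div_pos hε0 hd', fun v => ?_⟩
    rcases eq_or_ne v 0 with rfl | hv
    · simp
    · have hc : 0 < ‖v‖ := norm_pos_iff.mpr hv
      set c := ‖v‖ with hcdef
      have hmem : c⁻¹ • v ∈ Metric.sphere (0 : Fin d → ℝ) 1 := by
        rw [mem_sphere_zero_iff_norm, norm_smul, norm_inv, Real.norm_eq_abs,
          abs_of_pos hc, ← hcdef, inv_mul_cancel₀ hc.ne']
      have h1 : w ⬝ᵥ T *ᵥ w ≤ (c⁻¹ • v) ⬝ᵥ T *ᵥ (c⁻¹ • v) := hmin hmem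
      have h2 : (c⁻¹ • v) ⬝ᵥ T *ᵥ (c⁻¹ • v) = c⁻¹ * (c⁻¹ * (v ⬝ᵥ T *ᵥ v)) := by
        rw [mulVec_smul, dotProduct_smul, smul_dotProduct]
        simp only [smul_eq_mul]
        try ring
      have h3 : ∑ i, v i ^ 2 ≤ d * c ^ 2 := by
        calc ∑ i, v i ^ 2 ≤ ∑ _i : Fin d, c ^ 2 := by
              refine Finset.sum_le_sum fun i _ => ?_
              have h := norm_le_pi_norm v i
              rw [Real.norm_eq_abs] at h
              nlinarith [abs_nonneg (v i), le_abs_self (v i), neg_abs_le (v i)]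
          _ = d * c ^ 2 := by simp [Finset.sum_const, mul_comm]
      have h4 : c ^ 2 * (w ⬝ᵥ T *ᵥ w) ≤ v ⬝ᵥ T *ᵥ v := by
        rw [h2] at h1
        have hc2 : (0:ℝ) < c ^ 2 := by positivity
        replace h1 := mul_le_mul_of_nonneg_left h1 hc2.le
        calc c ^ 2 * (w ⬝ᵥ T *ᵥ w) ≤ c ^ 2 * (c⁻¹ * (c⁻¹ * (v ⬝ᵥ T *ᵥ v))) := h1
          _ = v ⬝ᵥ T *ᵥ v := by field_simp
      calc (w ⬝ᵥ T *ᵥ w) / d * ∑ i, v i ^ 2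
          ≤ (w ⬝ᵥ T *ᵥ w) / d * (d * c ^ 2) := by
            exact mul_le_mul_of_nonneg_left h3 (by positivity)
        _ = c ^ 2 * (w ⬝ᵥ T *ᵥ w) := by field_simp
        _ ≤ v ⬝ᵥ T *ᵥ v := h4

lemma aux_gauss_nonneg {d : ℕ} (μ : Fin d → ℝ) (S : Matrix (Fin d) (Fin d) ℝ)
    (x : Fin d → ℝ) : 0 ≤ gaussPdf d μ S x := by
  unfold gaussPdf
  positivity

lemma aux_1d_integrable {ε : ℝ} (hε : 0 < ε) (m : ℝ) :
    Integrable (fun t : ℝ => (1 + |t|) * Real.exp (-(ε / 2) * (t - m) ^ 2)) := by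
  have hb : 0 < ε / 2 := by linarith
  have habs : Integrable (fun s : ℝ => |s| * Real.exp (-(ε / 2) * s ^ 2)) := by
    have := (integrable_mul_exp_neg_mul_sq hb).abs
    simpa [abs_mul, Real.abs_exp] using this
  have base : Integrable (fun s : ℝ =>
      (1 + |m|) * Real.exp (-(ε / 2) * s ^ 2) + |s| * Real.exp (-(ε / 2) * s ^ 2)) :=
    ((integrable_exp_neg_mul_sq hb).const_mul _).add habs
  have base' := base.comp_sub_right m
  refine base'.mono' ?_ ?_
  · refine Continuous.aestronglyMeasurable ?_
    exact (continuous_const.add continuous_abs).mul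
      (continuous_const.mul ((continuous_id.sub continuous_const).pow 2)).rexp
  · refine Filter.Eventually.of_forall fun t => ?_
    have htri : |t| ≤ |t - m| + |m| := by
      have := abs_add_le (t - m) m
      simpa using this
    have hexp : (0:ℝ) < Real.exp (-(ε / 2) * (t - m) ^ 2) := Real.exp_pos _
    rw [Real.norm_eq_abs, abs_mul, Real.abs_exp, abs_of_nonneg (by positivity : (0:ℝ) ≤ 1 + |t|)]
    nlinarith

lemma aux_integrable (d : ℕ) (f : (Fin d → ℝ) → ℝ) (L : NNReal) (hlip : LipschitzWith L f)
    (μ : Fin d → ℝ) (S : Matrix (Fin d) (Fin d) ℝ) (hS : S.PosDef)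
    (a : ℝ) (b : Fin d → ℝ) :
    Integrable (fun x : Fin d → ℝ => f (a • x + b) * gaussPdf d μ S x) := by
  obtain ⟨ε, hε, hq⟩ := aux_posdef_bound S⁻¹ hS.inv
  set K : ℝ := (2 * Real.pi) ^ (-(d : ℝ) / 2) * Real.sqrt S.det⁻¹ with hKdef
  have hK0 : 0 ≤ K := by
    rw [hKdef]; positivity
  have hprod : Integrable (fun x : Fin d → ℝ =>
      ∏ i, (1 + |x i|) * Real.exp (-(ε / 2) * (x i - μ i) ^ 2)) :=
    Integrable.fintype_prod (f := fun i t => (1 + |t|) * Real.exp (-(ε / 2) * (t - μ i) ^ 2))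
      (fun i => aux_1d_integrable hε (μ i))
  refine (hprod.const_mul ((|f b| + L * |a|) * K)).mono' ?_ ?_
  · refine Continuous.aestronglyMeasurable (Continuous.mul ?_ ?_)
    · exact hlip.continuous.comp ((continuous_id.const_smul a).add continuous_const)
    · unfold gaussPdf
      exact (continuous_const.mul
        (continuous_const.mul
          ((aux_q_cont S⁻¹).comp (continuous_id.sub continuous_const))).rexp)
  · refine Filter.Eventually.of_forall fun x => ?_
    have hg0 : 0 ≤ gaussPdf d μ S x := aux_gauss_nonneg μ S x
    -- bound on |f|
    have hfb : |f (a • x + b)| ≤ |f b| + (L : ℝ) * |a| * ‖x‖ := by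
      have hd := hlip.dist_le_mul (a • x + b) b
      have hdd : dist (a • x + b) b = |a| * ‖x‖ := by
        rw [dist_eq_norm, add_sub_cancel_right, norm_smul, Real.norm_eq_abs]
      rw [hdd, Real.dist_eq] at hd
      have := abs_sub_abs_le_abs_sub (f (a • x + b)) (f b)
      nlinarith
    set P : ℝ := ∏ i, (1 + |x i|) with hPdef
    have hP1 : (1 : ℝ) ≤ P := by
      rw [hPdef]
      calc (1:ℝ) = ∏ _i : Fin d, (1:ℝ) := by simp
        _ ≤ ∏ i, (1 + |x i|) :=
          Finset.prod_le_prod (fun i _ => zero_le_one)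
            (fun i _ => le_add_of_nonneg_right (abs_nonneg _))
    have hxP : ‖x‖ ≤ P := by
      refine (pi_norm_le_iff_of_nonneg (by linarith)).mpr fun i => ?_
      have h1 : (1 : ℝ) + |x i| ≤ P := by
        rw [hPdef]
        calc (1:ℝ) + |x i| = ∏ j, (if j = i then 1 + |x j| else 1) := by
              rw [Finset.prod_ite_eq' Finset.univ i (fun j => 1 + |x j|)]
              simp
          _ ≤ ∏ j, (1 + |x j|) := by
              refine Finset.prod_le_prod (fun j _ => ?_) (fun j _ => ?_)
              · split_ifs with h
                · positivity
                · exact zero_le_one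
              · split_ifs with h
                · exact le_rfl
                · exact le_add_of_nonneg_right (abs_nonneg _)
      have := le_abs_self (x i)
      rw [Real.norm_eq_abs]
      linarith
    -- bound on the gaussian
    have hgauss : gaussPdf d μ S x ≤ K * ∏ i, Real.exp (-(ε / 2) * (x i - μ i) ^ 2) := by
      unfold gaussPdf
      rw [← hKdef, ← Real.exp_sum]
      refine mul_le_mul_of_nonneg_left (Real.exp_le_exp.mpr ?_) hK0
      have hqv := hq (x - μ)
      have hsum : ∑ i, (x - μ) i ^ 2 = ∑ i, (x i - μ i) ^ 2 := by
        simp [Pi.sub_apply]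
      rw [hsum] at hqv
      have : ∑ i, -(ε / 2) * (x i - μ i) ^ 2 = -(1/2) * (ε * ∑ i, (x i - μ i) ^ 2) := by
        rw [Finset.mul_sum, Finset.mul_sum]
        exact Finset.sum_congr rfl fun i _ => by ring
      rw [this]
      nlinarith
    have hE0 : 0 ≤ ∏ i, Real.exp (-(ε / 2) * (x i - μ i) ^ 2) :=
      Finset.prod_nonneg fun i _ => (Real.exp_pos _).le
    have hnorm : ‖f (a • x + b) * gaussPdf d μ S x‖ = |f (a • x + b)| * gaussPdf d μ S x := by
      rw [Real.norm_eq_abs, abs_mul, abs_of_nonneg hg0]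
    rw [hnorm]
    calc |f (a • x + b)| * gaussPdf d μ S x
        ≤ (|f b| + (L : ℝ) * |a| * ‖x‖) * (K * ∏ i, Real.exp (-(ε / 2) * (x i - μ i) ^ 2)) := by
          refine mul_le_mul hfb hgauss hg0 ?_
          positivity
      _ ≤ ((|f b| + (L : ℝ) * |a|) * P) * (K * ∏ i, Real.exp (-(ε / 2) * (x i - μ i) ^ 2)) := by
          refine mul_le_mul_of_nonneg_right ?_ (by positivity)
          have h1 : |f b| * 1 ≤ |f b| * P := by
            refine mul_le_mul_of_nonneg_left hP1 (abs_nonneg _)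
          have h2 : (L : ℝ) * |a| * ‖x‖ ≤ (L : ℝ) * |a| * P :=
            mul_le_mul_of_nonneg_left hxP (by positivity)
          nlinarith
      _ = (|f b| + (L : ℝ) * |a|) * K *
            ∏ i, (1 + |x i|) * Real.exp (-(ε / 2) * (x i - μ i) ^ 2) := by
          rw [Finset.prod_mul_distrib, ← hPdef]
          ring

/-- If `f : ℝ^d → ℝ` is convex, Lipschitz, and symmetric about `x⋆`, `X ~ N(μ, Σ)` with
`Σ` positive definite, and `λ ∈ [0,1]`, then
`E[f((1−λ)X + λμ)] ≥ E[f((1−λ)X + λx⋆)]`; equivalently, the Gaussian optimistic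
smoothing surrogate `s` of `f` satisfies `s(μ) ≥ s(x⋆)`. -/
theorem stmt_18 (d : ℕ) (f : (Fin d → ℝ) → ℝ)
    (hconv : ConvexOn ℝ Set.univ f) (hlip : ∃ L : NNReal, LipschitzWith L f)
    (xs : Fin d → ℝ) (hsymm : ∀ x : Fin d → ℝ, f (xs + x) = f (xs - x))
    (μ : Fin d → ℝ) (S : Matrix (Fin d) (Fin d) ℝ) (hS : S.PosDef)
    (lam : ℝ) (hlam0 : 0 ≤ lam) (hlam1 : lam ≤ 1) :
    (∫ x : Fin d → ℝ, f ((1 - lam) • x + lam • xs) * gaussPdf d μ S x) ≤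
      ∫ x : Fin d → ℝ, f ((1 - lam) • x + lam • μ) * gaussPdf d μ S x := by
  obtain ⟨L, hlip⟩ := hlip
  -- symmetry of f about xs, rephrased
  have hsym' : ∀ z : Fin d → ℝ, f z = f ((2:ℝ) • xs - z) := by
    intro z
    have h1 : xs + (z - xs) = z := by module
    have h2 : xs - (z - xs) = (2:ℝ) • xs - z := by module
    have := hsymm (z - xs)
    rw [h1, h2] at this
    exact this
  -- reflection invariance of the gaussian density
  have hρrefl : ∀ x : Fin d → ℝ, gaussPdf d μ S ((2:ℝ) • μ - x) = gaussPdf d μ S x := by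
    intro x
    unfold gaussPdf
    congr 2
    have h1 : (2:ℝ) • μ - x - μ = -(x - μ) := by module
    rw [h1, Matrix.mulVec_neg, dotProduct_neg, neg_dotProduct, neg_neg]
  -- integrability facts
  have hiB := aux_integrable d f L hlip μ S hS (1 - lam) (lam • xs)
  have hiA := aux_integrable d f L hlip μ S hS (1 - lam) (lam • μ)
  have hkey : ∀ x : Fin d → ℝ,
      (-(1 - lam)) • x + ((2 - lam) • μ) = (1 - lam) • ((2:ℝ) • μ - x) + lam • μ := by
    intro x; module
  have hiA' : Integrable
      (fun x : Fin d → ℝ => f ((1 - lam) • ((2:ℝ) • μ - x) + lam • μ) * gaussPdf d μ S x) := by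
    have := aux_integrable d f L hlip μ S hS (-(1 - lam)) ((2 - lam) • μ)
    simpa only [hkey] using this
  -- pointwise convexity estimate
  have hpt : ∀ x : Fin d → ℝ,
      f ((1 - lam) • x + lam • xs) ≤
        (1 - lam / 2) * f ((1 - lam) • x + lam • μ) +
          (lam / 2) * f ((1 - lam) • ((2:ℝ) • μ - x) + lam • μ) := by
    intro x
    have hcomb : (1 - lam) • x + lam • xs =
        (1 - lam / 2) • ((1 - lam) • x + lam • μ) +
          (lam / 2) • ((2:ℝ) • xs - ((1 - lam) • ((2:ℝ) • μ - x) + lam • μ)) := by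
      module
    rw [hcomb]
    have hc := hconv.2 (Set.mem_univ ((1 - lam) • x + lam • μ))
      (Set.mem_univ ((2:ℝ) • xs - ((1 - lam) • ((2:ℝ) • μ - x) + lam • μ)))
      (by linarith : (0:ℝ) ≤ 1 - lam / 2) (by linarith : (0:ℝ) ≤ lam / 2) (by ring)
    refine hc.trans ?_
    rw [← hsym' ((1 - lam) • ((2:ℝ) • μ - x) + lam • μ)]
    simp [smul_eq_mul]
  -- the reflected integral equals the original one
  have hrefl_int :
      (∫ x : Fin d → ℝ, f ((1 - lam) • ((2:ℝ) • μ - x) + lam • μ) * gaussPdf d μ S x) =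
        ∫ x : Fin d → ℝ, f ((1 - lam) • x + lam • μ) * gaussPdf d μ S x := by
    have h := integral_sub_left_eq_self
      (fun x : Fin d → ℝ => f ((1 - lam) • x + lam • μ) * gaussPdf d μ S x)
      volume ((2:ℝ) • μ)
    simp only [hρrefl] at h
    exact h
  calc (∫ x : Fin d → ℝ, f ((1 - lam) • x + lam • xs) * gaussPdf d μ S x)
      ≤ ∫ x : Fin d → ℝ,
          ((1 - lam / 2) * (f ((1 - lam) • x + lam • μ) * gaussPdf d μ S x) +
            (lam / 2) * (f ((1 - lam) • ((2:ℝ) • μ - x) + lam • μ) * gaussPdf d μ S x)) := by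
        refine integral_mono hiB ((hiA.const_mul _).add (hiA'.const_mul _)) fun x => ?_
        have := mul_le_mul_of_nonneg_right (hpt x) (aux_gauss_nonneg μ S x)
        calc f ((1 - lam) • x + lam • xs) * gaussPdf d μ S x
            ≤ ((1 - lam / 2) * f ((1 - lam) • x + lam • μ) +
                (lam / 2) * f ((1 - lam) • ((2:ℝ) • μ - x) + lam • μ)) * gaussPdf d μ S x := this
          _ = (1 - lam / 2) * (f ((1 - lam) • x + lam • μ) * gaussPdf d μ S x) +
              (lam / 2) * (f ((1 - lam) • ((2:ℝ) • μ - x) + lam • μ) * gaussPdf d μ S x) := by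
              ring
    _ = (1 - lam / 2) * (∫ x : Fin d → ℝ, f ((1 - lam) • x + lam • μ) * gaussPdf d μ S x) +
        (lam / 2) * (∫ x : Fin d → ℝ,
          f ((1 - lam) • ((2:ℝ) • μ - x) + lam • μ) * gaussPdf d μ S x) := by
        rw [integral_add (hiA.const_mul _) (hiA'.const_mul _), integral_const_mul,
          integral_const_mul]
    _ = ∫ x : Fin d → ℝ, f ((1 - lam) • x + lam • μ) * gaussPdf d μ S x := by
        rw [hrefl_int]; ring
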